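/- Let n ≥ 1, let 0 ≤ r ≤ n−1, and let κ ∈ ℝ^n satisfy σ_i(κ) > 0 for all 1 ≤ i ≤ r+1. Then σ_1(κ)·σ_{r+1}(κ) − (r+2)·σ_{r+2}(κ) > 0, where σ_{r+2}(κ) is understood to be 0 if r+2 > n. Equivalently, writing H_j(κ) = σ_j(κ)/C(n,j), one has σ_1σ_{r+1} − (r+2)σ_{r+2} = C(n,r+1)·[(r+1)H_1H_{r+1} + (n−r−1)(H_1H_{r+1} − H_{r+2})] > 0. -/

import Mathlib

open Finset

/-- The `r`-th elementary symmetric polynomial of `κ = (κ_1, …, κ_n)`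
(equal to `0` when `r > n`). -/
noncomputable def esymm (n : ℕ) (κ : Fin n → ℝ) (r : ℕ) : ℝ :=
  ∑ s ∈ powersetCard r (univ : Finset (Fin n)), ∏ i ∈ s, κ i

/-- The normalized `r`-th mean curvature `H_r(κ) = σ_r(κ) / C(n,r)`. -/
noncomputable def Hmc (n : ℕ) (κ : Fin n → ℝ) (r : ℕ) : ℝ :=
  esymm n κ r / (n.choose r)

lemma L2 {ι : Type*} [DecidableEq ι] (s : Finset ι) (hs : s.Nonempty) (x : ι → ℝ) :
    ∑ T ∈ powersetCard (s.card - 1) s, ∏ i ∈ T, x i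
      = ∑ i ∈ s, ∏ j ∈ s.erase i, x j := by
  refine (Finset.sum_bij (fun i hi => s.erase i) ?_ ?_ ?_ ?_).symm
  · intro i hi
    rw [mem_powersetCard]
    exact ⟨erase_subset _ _, by rw [card_erase_of_mem hi]⟩
  · intro i hi j hj h
    by_contra hne
    have : i ∈ s.erase i := by rw [h]; exact mem_erase.2 ⟨hne, hi⟩
    exact (mem_erase.1 this).1 rfl
  · intro T hT
    rw [mem_powersetCard] at hT
    obtain ⟨hsub, hcard⟩ := hT
    have hs1 : 1 ≤ s.card := card_pos.2 hs
    have hcs : (s \ T).card = 1 := by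
      rw [card_sdiff_of_subset hsub, hcard]
      omega
    obtain ⟨i, hi⟩ := card_eq_one.1 hcs
    refine ⟨i, ?_, ?_⟩
    · have : i ∈ s \ T := hi ▸ mem_singleton_self i
      exact (mem_sdiff.1 this).1
    · show s.erase i = T
      rw [erase_eq, ← hi, sdiff_sdiff_right_self]
      simpa using inf_eq_right.mpr hsub
  · intros; rfl

-- L1: double counting subsets avoiding a point
lemma L1 {ι : Type*} [DecidableEq ι] (s : Finset ι) (x : ι → ℝ) (j : ℕ) :
    ∑ i ∈ s, ∑ T ∈ powersetCard j (s.erase i), ∏ l ∈ T, x l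
      = ((s.card - j : ℕ) : ℝ) * ∑ T ∈ powersetCard j s, ∏ l ∈ T, x l := by
  have key : ∀ i ∈ s, powersetCard j (s.erase i)
      = (powersetCard j s).filter (fun T => i ∉ T) := by
    intro i hi
    ext T
    simp only [mem_powersetCard, mem_filter, subset_erase]
    tauto
  calc ∑ i ∈ s, ∑ T ∈ powersetCard j (s.erase i), ∏ l ∈ T, x l
      = ∑ i ∈ s, ∑ T ∈ (powersetCard j s).filter (fun T => i ∉ T), ∏ l ∈ T, x l := by
        exact Finset.sum_congr rfl fun i hi => by rw [key i hi]
    _ = ∑ i ∈ s, ∑ T ∈ powersetCard j s, if i ∉ T then ∏ l ∈ T, x l else 0 := by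
        exact Finset.sum_congr rfl fun i hi => (Finset.sum_filter _ _)
    _ = ∑ T ∈ powersetCard j s, ∑ i ∈ s, if i ∉ T then ∏ l ∈ T, x l else 0 :=
        Finset.sum_comm
    _ = ∑ T ∈ powersetCard j s, ((s.card - j : ℕ) : ℝ) * ∏ l ∈ T, x l := by
        refine Finset.sum_congr rfl fun T hT => ?_
        rw [← Finset.sum_filter]
        rw [Finset.sum_const]
        have hsub : T ⊆ s := (mem_powersetCard.1 hT).1
        have hcard : T.card = j := (mem_powersetCard.1 hT).2
        have : s.filter (fun i => i ∉ T) = s \ T := (Finset.sdiff_eq_filter s T).symm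
        rw [this, card_sdiff_of_subset hsub, hcard, nsmul_eq_mul]
    _ = ((s.card - j : ℕ) : ℝ) * ∑ T ∈ powersetCard j s, ∏ l ∈ T, x l := by
        rw [Finset.mul_sum]

-- Newton's inequality, base case: n = k+2 variables, cleared denominators
lemma newton_base (k : ℕ) (x : Fin (k+2) → ℝ) :
    2 * ((k:ℝ)+2) * (esymm (k+2) x k * esymm (k+2) x (k+2))
      ≤ ((k:ℝ)+1) * esymm (k+2) x (k+1)^2 := by
  classical
  set P : Fin (k+2) → ℝ := fun i => ∏ j ∈ univ.erase i, x j with hP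
  have hcardu : (univ : Finset (Fin (k+2))).card = k + 2 := by simp
  have h1 : esymm (k+2) x (k+1) = ∑ i, P i := by
    rw [esymm]
    have h : k + 1 = (univ : Finset (Fin (k+2))).card - 1 := by rw [hcardu]; omega
    rw [h, L2 _ univ_nonempty]
  have h2 : esymm (k+2) x (k+2) = ∏ i, x i := by
    rw [esymm]
    have h := Finset.powersetCard_self (univ : Finset (Fin (k+2)))
    rw [hcardu] at h
    rw [h, Finset.sum_singleton]
  have h3 : ∀ i : Fin (k+2), ∀ j ∈ univ.erase i,
      P i * P j = esymm (k+2) x (k+2) * ∏ l ∈ (univ.erase i).erase j, x l := by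
    intro i j hj
    have hji : j ≠ i := (mem_erase.1 hj).1
    have hjmem : j ∈ univ.erase i := hj
    have himem : i ∈ (univ.erase j : Finset (Fin (k+2))) :=
      mem_erase.2 ⟨fun h => hji h.symm, mem_univ i⟩
    have e1 : P i = x j * ∏ l ∈ (univ.erase i).erase j, x l :=
      (Finset.mul_prod_erase _ _ hjmem).symm
    have e2 : P j = x i * ∏ l ∈ (univ.erase j).erase i, x l :=
      (Finset.mul_prod_erase _ _ himem).symm
    have ecomm : (univ.erase j).erase i = (univ.erase i).erase j := Finset.erase_right_comm
    have e3 : (∏ i, x i) = x i * P i := (Finset.mul_prod_erase _ _ (mem_univ i)).symm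
    rw [h2, e3, e1, e2, ecomm]
    ring
  have h4 : ∑ i, ∑ j ∈ univ.erase i, ∏ l ∈ (univ.erase i).erase j, x l
      = 2 * esymm (k+2) x k := by
    have inner : ∀ i : Fin (k+2), ∑ j ∈ univ.erase i, ∏ l ∈ (univ.erase i).erase j, x l
        = ∑ T ∈ powersetCard k (univ.erase i), ∏ l ∈ T, x l := by
      intro i
      have hne : (univ.erase i : Finset (Fin (k+2))).Nonempty := by
        rw [← card_pos, card_erase_of_mem (mem_univ i), hcardu]; omega
      have hc : (univ.erase i : Finset (Fin (k+2))).card - 1 = k := by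
        rw [card_erase_of_mem (mem_univ i), hcardu]; omega
      have := L2 (univ.erase i) hne x
      rw [hc] at this
      exact this.symm
    calc ∑ i, ∑ j ∈ univ.erase i, ∏ l ∈ (univ.erase i).erase j, x l
        = ∑ i, ∑ T ∈ powersetCard k (univ.erase i), ∏ l ∈ T, x l :=
          Finset.sum_congr rfl fun i _ => inner i
      _ = (((univ : Finset (Fin (k+2))).card - k : ℕ) : ℝ)
            * ∑ T ∈ powersetCard k univ, ∏ l ∈ T, x l := L1 univ x k
      _ = 2 * esymm (k+2) x k := by
          rw [hcardu, esymm]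
          norm_num
  have h5 : ∑ i, ∑ j ∈ univ.erase i, P i * P j = (∑ i, P i)^2 - ∑ i, (P i)^2 := by
    have : ∀ i : Fin (k+2), ∑ j ∈ univ.erase i, P i * P j = P i * ((∑ l, P l) - P i) := by
      intro i
      rw [← Finset.mul_sum, Finset.sum_erase_eq_sub (mem_univ i)]
    rw [Finset.sum_congr rfl fun i _ => this i]
    rw [Finset.sum_congr rfl fun (i : Fin (k+2)) (_ : i ∈ univ) =>
      (mul_sub (P i) (∑ l, P l) (P i))]
    rw [Finset.sum_sub_distrib, ← Finset.sum_mul]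
    ring_nf
  have h6 : 2 * (esymm (k+2) x k * esymm (k+2) x (k+2))
      = (∑ i, P i)^2 - ∑ i, (P i)^2 := by
    rw [← h5]
    rw [Finset.sum_congr rfl fun i _ => Finset.sum_congr rfl (h3 i)]
    have : ∀ i : Fin (k+2), ∑ j ∈ univ.erase i,
        esymm (k+2) x (k+2) * ∏ l ∈ (univ.erase i).erase j, x l
        = esymm (k+2) x (k+2) * ∑ j ∈ univ.erase i, ∏ l ∈ (univ.erase i).erase j, x l := by
      intro i; rw [Finset.mul_sum]
    rw [Finset.sum_congr rfl fun i _ => this i, ← Finset.mul_sum, h4]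
    ring
  have cs : (∑ i, P i)^2 ≤ ((k:ℝ)+2) * ∑ i, (P i)^2 := by
    have := sq_sum_le_card_mul_sum_sq (s := (univ : Finset (Fin (k+2)))) (f := P)
    rw [hcardu] at this
    push_cast at this
    convert this using 2 <;> norm_num
  rw [h1]
  nlinarith [h6, cs]

open Polynomial in
/-- Differentiation step: for a multiset `s` of reals there is a multiset `t`
(the roots of the derivative of `∏ (X - a)`) with one fewer element and
`m·e_j(t) = (m-j)·e_j(s)`. -/
lemma esymm_step (s : Multiset ℝ) (hs : s ≠ 0) :
    ∃ t : Multiset ℝ, Multiset.card t = Multiset.card s - 1 ∧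
      ∀ j : ℕ, ((Multiset.card s : ℝ)) * t.esymm j
        = ((Multiset.card s : ℝ) - j) * s.esymm j := by
  classical
  set m := Multiset.card s with hm
  have hm1 : 1 ≤ m := by
    rw [hm, Nat.one_le_iff_ne_zero]
    simpa using hs
  set p : ℝ[X] := (s.map fun a => X - C a).prod with hp
  have hmonic : p.Monic := monic_multiset_prod_of_monic _ _ fun a _ => monic_X_sub_C a
  have hdeg : p.natDegree = m := natDegree_multiset_prod_X_sub_C_eq_card s
  have hroots : p.roots = s := roots_multiset_prod_X_sub_C s
  set q := derivative p with hq
  have hqc : q.coeff (m-1) = (m : ℝ) := by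
    rw [hq, coeff_derivative]
    have h1 : m - 1 + 1 = m := by omega
    rw [h1, ← hdeg, hmonic.coeff_natDegree, one_mul, hdeg]
    norm_cast
  have hqne : q ≠ 0 := fun h => by
    rw [h, coeff_zero] at hqc
    have : (m:ℝ) ≠ 0 := by positivity
    exact this hqc.symm
  have hqdegle : q.natDegree ≤ m - 1 := by
    simpa [hq, hdeg] using natDegree_derivative_le p
  have hcard_ge : m - 1 ≤ Multiset.card q.roots := by
    have h := Polynomial.card_roots_le_derivative p
    rw [hroots] at h
    rw [hq]
    omega
  have hcard_le : Multiset.card q.roots ≤ q.natDegree := card_roots' q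
  have hcardq : Multiset.card q.roots = m - 1 :=
    le_antisymm (hcard_le.trans hqdegle) hcard_ge
  have hqdeg : q.natDegree = m - 1 := le_antisymm hqdegle (hcardq ▸ hcard_le)
  have hlead : q.leadingCoeff = (m : ℝ) := by
    rw [leadingCoeff, hqdeg, hqc]
  have hfact : Polynomial.C q.leadingCoeff * (q.roots.map fun a => X - C a).prod = q :=
    C_leadingCoeff_mul_prod_multiset_X_sub_C (hcardq.trans hqdeg.symm)
  refine ⟨q.roots, hcardq, fun j => ?_⟩
  rcases le_or_gt j (m - 1) with hj | hj
  · -- main case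
    have hstep1 : q.coeff (m - 1 - j)
        = (m : ℝ) * ((-1)^j * (q.roots).esymm j) := by
      conv_lhs => rw [← hfact]
      rw [coeff_C_mul, hlead]
      have hle : m - 1 - j ≤ Multiset.card q.roots := by omega
      rw [Multiset.prod_X_sub_C_coeff q.roots hle, hcardq]
      have : m - 1 - (m - 1 - j) = j := by omega
      rw [this]
    have hstep2 : q.coeff (m - 1 - j)
        = ((m : ℝ) - j) * ((-1)^j * s.esymm j) := by
      rw [hq, coeff_derivative]
      have h1 : m - 1 - j + 1 = m - j := by omega
      rw [h1]
      have hle : m - j ≤ Multiset.card s := by omega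
      rw [hp, Multiset.prod_X_sub_C_coeff s hle, ← hm]
      have h2 : m - (m - j) = j := by omega
      rw [h2]
      have h4 : ((m - 1 - j : ℕ) : ℝ) + 1 = (m : ℝ) - j := by
        rw [Nat.sub_sub, Nat.cast_sub (by omega : 1 + j ≤ m)]
        push_cast
        ring
      linear_combination ((-1:ℝ)^j * s.esymm j) * h4
    have hε : ((-1 : ℝ))^j ≠ 0 := pow_ne_zero _ (by norm_num)
    apply mul_left_cancel₀ hε
    have := hstep1.symm.trans hstep2
    linear_combination this
  · -- degenerate case : j ≥ m
    have hjm : m ≤ j := by omega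
    have ht0 : (q.roots).esymm j = 0 := by
      rw [Multiset.esymm, Multiset.powersetCard_eq_empty j (by omega : Multiset.card q.roots < j)]
      simp
    rcases eq_or_lt_of_le hjm with h | h
    · rw [ht0, ← h]
      simp
    · have hs0 : s.esymm j = 0 := by
        rw [Multiset.esymm, Multiset.powersetCard_eq_empty j (by omega : Multiset.card s < j)]
        simp
      rw [ht0, hs0]
      simp

noncomputable def Hms (s : Multiset ℝ) (j : ℕ) : ℝ :=
  s.esymm j / ((Multiset.card s).choose j)

lemma choose_id (m j : ℕ) (hm : 1 ≤ m) :
    m * (m-1).choose j = m.choose j * (m - j) := by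
  have h1 := Nat.add_one_mul_choose_eq (m-1) j
  rw [Nat.sub_add_cancel hm] at h1
  rw [h1, Nat.choose_succ_right_eq]

lemma Hms_step (s t : Multiset ℝ) (hm1 : 1 ≤ Multiset.card s)
    (hcard : Multiset.card t = Multiset.card s - 1)
    (hrel : ∀ j : ℕ, ((Multiset.card s : ℝ)) * t.esymm j
        = ((Multiset.card s : ℝ) - j) * s.esymm j)
    (j : ℕ) (hj : j ≤ Multiset.card s - 1) : Hms t j = Hms s j := by
  set m := Multiset.card s with hmdef
  have hc : (m : ℝ) * ((m-1).choose j : ℝ) = ((m.choose j : ℕ) : ℝ) * ((m : ℝ) - j) := by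
    have h := choose_id m j hm1
    have : ((m - j : ℕ) : ℝ) = (m : ℝ) - j := by
      rw [Nat.cast_sub (by omega : j ≤ m)]
    calc (m : ℝ) * ((m-1).choose j : ℝ) = ((m * (m-1).choose j : ℕ) : ℝ) := by push_cast; ring
      _ = ((m.choose j * (m - j) : ℕ) : ℝ) := by rw [h]
      _ = ((m.choose j : ℕ) : ℝ) * ((m : ℝ) - j) := by push_cast [this]; ring
  have hd1 : (0:ℝ) < ((m-1).choose j : ℝ) := by
    have : 0 < (m-1).choose j := Nat.choose_pos (by omega)
    exact_mod_cast this
  have hd2 : (0:ℝ) < (m.choose j : ℝ) := by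
    have : 0 < m.choose j := Nat.choose_pos (by omega)
    exact_mod_cast this
  rw [Hms, Hms, hcard, ← hmdef]
  rw [div_eq_div_iff hd1.ne' hd2.ne']
  have hm0 : (m : ℝ) ≠ 0 := by positivity
  apply mul_left_cancel₀ hm0
  linear_combination ((m.choose j : ℕ) : ℝ) * (hrel j) - s.esymm j * hc

lemma Hms_map (n : ℕ) (x : Fin n → ℝ) (j : ℕ) :
    Hms (Multiset.map x Finset.univ.val) j = Hmc n x j := by
  rw [Hms, Hmc]
  have h1 : (Multiset.map x Finset.univ.val).esymm j = esymm n x j := by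
    rw [Finset.esymm_map_val]; rfl
  have h2 : Multiset.card (Multiset.map x Finset.univ.val) = n := by simp
  rw [h1, h2]

lemma exists_fn (s : Multiset ℝ) (m : ℕ) (h : Multiset.card s = m) :
    ∃ x : Fin m → ℝ, Multiset.map x Finset.univ.val = s := by
  have hl : (↑s.toList : Multiset ℝ) = s := Multiset.coe_toList s
  have hlen : s.toList.length = m := by rw [← h, ← hl]; simp
  refine ⟨fun i => s.toList.get (Fin.cast hlen.symm i), ?_⟩
  rw [Fin.univ_val_map]
  conv_rhs => rw [← hl]
  congr 1
  apply List.ext_getElem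
  · simp [hlen]
  · intro i h1 h2
    simp [List.getElem_ofFn]

lemma newton_multiset : ∀ (m k : ℕ) (s : Multiset ℝ), Multiset.card s = m → k + 2 ≤ m →
    Hms s k * Hms s (k+2) ≤ Hms s (k+1)^2 := by
  intro m
  induction m using Nat.strong_induction_on with
  | _ m ih =>
    intro k s hcard hk
    rcases eq_or_lt_of_le hk with heq | hlt
    · -- base: card s = k + 2
      subst hcard
      obtain ⟨x, hx⟩ := exists_fn s (k+2) heq.symm
      rw [← hx]
      rw [Hms_map, Hms_map, Hms_map]
      have hbase := newton_base k x
      have hC2 : 2 * (((k+2).choose k : ℕ) : ℝ) = ((k:ℝ)+2) * ((k:ℝ)+1) := by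
        have hsymm : (k+2).choose 2 = (k+2).choose k := by
          have := Nat.choose_symm (by omega : k ≤ k + 2)
          simpa using this
        have h2 : (k+2).choose 2 = (k+2) * (k+1) / 2 := by
          rw [Nat.choose_two_right]
          norm_num
        have heven : 2 ∣ (k+2) * (k+1) := by
          rcases Nat.even_or_odd k with ⟨c, hc⟩ | ⟨c, hc⟩
          · exact ⟨(c+1)*(k+1), by subst hc; ring⟩
          · exact ⟨(k+2)*(c+1), by subst hc; ring⟩
        have : 2 * ((k+2).choose k) = (k+2) * (k+1) := by
          rw [← hsymm, h2, Nat.mul_div_cancel' heven]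
        exact_mod_cast congrArg (Nat.cast (R := ℝ)) this
      rw [Hmc, Hmc, Hmc]
      have e1 : ((k+2).choose (k+2) : ℝ) = 1 := by simp
      have e2 : ((k+2).choose (k+1) : ℝ) = (k:ℝ) + 2 := by
        have : (k+2).choose (k+1) = k+2 := by
          have := Nat.choose_symm (by omega : k + 1 ≤ k + 2)
          simpa using this
        rw [this]; push_cast; ring
      rw [e1, e2]
      have hCpos : (0:ℝ) < (((k+2).choose k : ℕ) : ℝ) := by
        have : 0 < (k+2).choose k := Nat.choose_pos (by omega)
        exact_mod_cast this
      rw [div_one, div_pow, div_mul_eq_mul_div, div_le_div_iff₀ (by positivity) (by positivity)]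
      have hint := mul_le_mul_of_nonneg_left hbase
        (show (0:ℝ) ≤ ((k:ℝ)+2)/2 by positivity)
      nlinarith [hint, hC2, sq_nonneg (esymm (k+2) x (k+1))]
    · -- inductive step
      have hs0 : s ≠ 0 := by
        intro h
        rw [h] at hcard
        simp at hcard
        omega
      subst hcard
      obtain ⟨t, htcard, hrel⟩ := esymm_step s hs0
      have hm1 : 1 ≤ Multiset.card s := by omega
      have hstep : ∀ j, j ≤ Multiset.card s - 1 → Hms t j = Hms s j := fun j hj =>
        Hms_step s t hm1 htcard hrel j hj
      rw [← hstep k (by omega), ← hstep (k+1) (by omega), ← hstep (k+2) (by omega)]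
      exact ih (Multiset.card s - 1) (by omega) k t (by omega) (by omega)

lemma newton_ineq (n k : ℕ) (hkn : k + 2 ≤ n) (x : Fin n → ℝ) :
    Hmc n x k * Hmc n x (k+2) ≤ Hmc n x (k+1)^2 := by
  have := newton_multiset n k (Multiset.map x Finset.univ.val) (by simp) hkn
  rwa [Hms_map, Hms_map, Hms_map] at this

lemma esymm_of_gt (n : ℕ) (κ : Fin n → ℝ) (j : ℕ) (h : n < j) : esymm n κ j = 0 := by
  rw [esymm]
  have : powersetCard j (univ : Finset (Fin n)) = ∅ := by
    rw [Finset.powersetCard_eq_empty]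
    simpa using h
  rw [this, Finset.sum_empty]

lemma Hmc_of_gt (n : ℕ) (κ : Fin n → ℝ) (j : ℕ) (h : n < j) : Hmc n κ j = 0 := by
  rw [Hmc, esymm_of_gt n κ j h, zero_div]

lemma Hmc_zero (n : ℕ) (κ : Fin n → ℝ) : Hmc n κ 0 = 1 := by
  rw [Hmc, esymm]
  simp

lemma maclaurin_chain (n : ℕ) (κ : Fin n → ℝ) :
    ∀ K, 1 ≤ K → K ≤ n → (∀ j, 1 ≤ j → j ≤ K → 0 < Hmc n κ j) →
      Hmc n κ (K+1) ≤ Hmc n κ 1 * Hmc n κ K := by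
  intro K hK1
  induction K, hK1 using Nat.le_induction with
  | base =>
    intro h1n hpos
    rcases le_or_gt 2 n with h2 | h2
    · have := newton_ineq n 0 h2 κ
      rw [Hmc_zero, one_mul] at this
      calc Hmc n κ 2 ≤ Hmc n κ 1 ^ 2 := this
        _ = Hmc n κ 1 * Hmc n κ 1 := sq (Hmc n κ 1) ▸ by ring
    · have hn1 : n = 1 := by omega
      rw [Hmc_of_gt n κ 2 (by omega)]
      have := hpos 1 le_rfl le_rfl
      positivity
  | succ K hK1 ih =>
    intro hKn hpos
    have hH1 := hpos 1 (by omega) (by omega)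
    have hHK := hpos K (by omega) (by omega)
    have hHK1 := hpos (K+1) (by omega) (by omega)
    rcases le_or_gt (Hmc n κ (K+1+1)) 0 with hle | hgt
    · exact hle.trans (le_of_lt (mul_pos hH1 hHK1))
    · have hK2n : K + 2 ≤ n := by
        by_contra hcon
        have : n < K + 2 := by omega
        rw [show K+1+1 = K+2 from rfl, Hmc_of_gt n κ (K+2) this] at hgt
        exact lt_irrefl 0 hgt
      have hnewton := newton_ineq n K hK2n κ
      have hih := ih (by omega) (fun j h1 h2 => hpos j h1 (by omega))
      nlinarith [hnewton, hih, hHK, hHK1, hH1, hgt]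

/-- If `σ_i(κ) > 0` for `1 ≤ i ≤ r+1`, then `σ_1σ_{r+1} - (r+2)σ_{r+2} > 0`; moreover
`σ_1σ_{r+1} - (r+2)σ_{r+2} = C(n,r+1)·[(r+1)H_1H_{r+1} + (n-r-1)(H_1H_{r+1} - H_{r+2})]`. -/
theorem trace_h_sq_pos (n r : ℕ) (hn : 1 ≤ n) (hr : r ≤ n - 1) (κ : Fin n → ℝ)
    (hκ : ∀ i, 1 ≤ i → i ≤ r + 1 → 0 < esymm n κ i) :
    esymm n κ 1 * esymm n κ (r + 1) - ((r : ℝ) + 2) * esymm n κ (r + 2)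
        = (n.choose (r + 1) : ℝ) *
            (((r : ℝ) + 1) * Hmc n κ 1 * Hmc n κ (r + 1)
              + ((n : ℝ) - r - 1) * (Hmc n κ 1 * Hmc n κ (r + 1) - Hmc n κ (r + 2)))
      ∧ 0 < esymm n κ 1 * esymm n κ (r + 1) - ((r : ℝ) + 2) * esymm n κ (r + 2) := by
  have hkn : r + 1 ≤ n := by omega
  set H1 := Hmc n κ 1 with hH1def
  set Hk := Hmc n κ (r+1) with hHkdef
  set Hk1 := Hmc n κ (r+2) with hHk1def
  have hpos : ∀ j, 1 ≤ j → j ≤ r + 1 → 0 < Hmc n κ j := by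
    intro j h1 h2
    rw [Hmc]
    have hc : (0:ℝ) < (n.choose j : ℝ) := by
      have : 0 < n.choose j := Nat.choose_pos (by omega)
      exact_mod_cast this
    exact div_pos (hκ j h1 h2) hc
  have hH1 : 0 < H1 := hpos 1 le_rfl (by omega)
  have hHk : 0 < Hk := hpos (r+1) (by omega) le_rfl
  have hchain : Hk1 ≤ H1 * Hk := maclaurin_chain n κ (r+1) (by omega) hkn hpos
  -- esymm in terms of Hmc
  have hch : ∀ j, j ≤ n → esymm n κ j = (n.choose j : ℝ) * Hmc n κ j := by
    intro j hj
    rw [Hmc]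
    have hc : ((n.choose j : ℕ) : ℝ) ≠ 0 := by
      have : 0 < n.choose j := Nat.choose_pos hj
      positivity
    field_simp
  have he1 : esymm n κ 1 = (n : ℝ) * H1 := by
    rw [hch 1 (by omega), hH1def, Nat.choose_one_right]
  have hek : esymm n κ (r+1) = (n.choose (r+1) : ℝ) * Hk := hch (r+1) hkn
  have hek1 : esymm n κ (r+2) = (n.choose (r+2) : ℝ) * Hk1 := by
    rcases le_or_gt (r+2) n with h | h
    · exact hch (r+2) h
    · rw [esymm_of_gt n κ (r+2) h, hHk1def, Hmc_of_gt n κ (r+2) h, mul_zero]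
  have hcc : ((r:ℝ) + 2) * (n.choose (r+2) : ℝ) = ((n:ℝ) - (r+1)) * (n.choose (r+1) : ℝ) := by
    have h := Nat.choose_succ_right_eq n (r+1)
    have h' : ((n.choose (r+2) * (r+2) : ℕ) : ℝ) = ((n.choose (r+1) * (n - (r+1)) : ℕ) : ℝ) := by
      exact_mod_cast congrArg (Nat.cast (R := ℝ)) h
    push_cast [Nat.cast_sub hkn] at h'
    linarith [h']
  have key : esymm n κ 1 * esymm n κ (r + 1) - ((r : ℝ) + 2) * esymm n κ (r + 2)
      = (n.choose (r+1) : ℝ) * ((n:ℝ) * (H1 * Hk) - ((n:ℝ) - (r+1)) * Hk1) := by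
    rw [he1, hek, hek1]
    linear_combination (-Hk1) * hcc
  have hCpos : (0:ℝ) < (n.choose (r+1) : ℝ) := by
    have : 0 < n.choose (r+1) := Nat.choose_pos hkn
    exact_mod_cast this
  constructor
  · rw [key]; ring
  · rw [key]
    apply mul_pos hCpos
    have hnr : (0:ℝ) ≤ (n:ℝ) - (r+1) := by
      have : ((r:ℕ)+1 : ℝ) ≤ (n:ℝ) := by exact_mod_cast hkn
      linarith
    have hint := mul_le_mul_of_nonneg_left hchain hnr
    have hA : 0 < H1 * Hk := mul_pos hH1 hHk
    have hrn : (0:ℝ) ≤ (r:ℝ) := by positivity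
    nlinarith [hint, hA, hrn]
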